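/- arXiv:2412.17706 — 7 statements merged into one kernel-verified Lean document; each statement's English description precedes it below -/
import Mathlib

section
/- Let E be a normed vector space over ℝ, s ∈ E, B ≥ 0, α > 0, λ ∈ [0,1], and M ≥ 1 a natural number. Set u₀ = (1−λ)·exp(−α). Suppose q ∈ E admits a decomposition q = (1−λ)^M · x + λ · Σ_{K=0}^{M−1} (1−λ)^K · χ_K with elements x, χ_0, …, χ_{M−1} ∈ E satisfying ‖x − s‖ ≤ B·exp(−α·M) and ‖χ_K − s‖ ≤ B·exp(−α·K) for every K < M. Then ‖q − s‖ ≤ B·( u₀^M · (1 − λ/(1−u₀)) + λ/(1−u₀) ). -/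
theorem stmt0 {E : Type*} [NormedAddCommGroup E] [NormedSpace ℝ E]
    (s : E) (B α lam : ℝ) (hB : 0 ≤ B) (hα : 0 < α)
    (hlam0 : 0 ≤ lam) (hlam1 : lam ≤ 1)
    (M : ℕ) (hM : 1 ≤ M) (q x : E) (χ : ℕ → E)
    (hq : q = (1 - lam) ^ M • x + lam • ∑ K ∈ Finset.range M, (1 - lam) ^ K • χ K)
    (hx : ‖x - s‖ ≤ B * Real.exp (-α * M))
    (hχ : ∀ K < M, ‖χ K - s‖ ≤ B * Real.exp (-α * K)) :
    ‖q - s‖ ≤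
      B * (((1 - lam) * Real.exp (-α)) ^ M *
            (1 - lam / (1 - (1 - lam) * Real.exp (-α))) +
          lam / (1 - (1 - lam) * Real.exp (-α))) := by
  set u : ℝ := (1 - lam) * Real.exp (-α) with hu
  have hl0 : (0:ℝ) ≤ 1 - lam := by linarith
  have hl1 : 1 - lam ≤ 1 := by linarith
  have he0 : (0:ℝ) < Real.exp (-α) := Real.exp_pos _
  have he1 : Real.exp (-α) < 1 := by
    rw [Real.exp_lt_one_iff]; linarith
  have hu0 : 0 ≤ u := mul_nonneg hl0 he0.le
  have hu1 : u < 1 := lt_of_le_of_lt (by nlinarith : u ≤ Real.exp (-α)) he1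
  have h1u : 0 < 1 - u := by linarith
  -- scalar sum identity
  have hgs : lam * ∑ K ∈ Finset.range M, (1 - lam) ^ K = 1 - (1 - lam) ^ M := by
    have := geom_sum_mul (1 - lam) M
    nlinarith [this]
  have key : q - s = (1 - lam) ^ M • (x - s)
      + lam • ∑ K ∈ Finset.range M, (1 - lam) ^ K • (χ K - s) := by
    have h2 : ∑ K ∈ Finset.range M, (1 - lam) ^ K • (χ K - s)
        = (∑ K ∈ Finset.range M, (1 - lam) ^ K • χ K)
          - (∑ K ∈ Finset.range M, (1 - lam) ^ K) • s := by
      simp [smul_sub, Finset.sum_sub_distrib, Finset.sum_smul]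
    rw [hq, h2, smul_sub, smul_sub, smul_smul, hgs, sub_smul, one_smul]
    abel
  have hnorm : ‖q - s‖ ≤ (1 - lam) ^ M * ‖x - s‖
      + lam * ∑ K ∈ Finset.range M, (1 - lam) ^ K * ‖χ K - s‖ := by
    rw [key]
    refine le_trans (norm_add_le _ _) ?_
    gcongr
    · rw [norm_smul, Real.norm_eq_abs, abs_of_nonneg (pow_nonneg hl0 M)]
    · rw [norm_smul, Real.norm_eq_abs, abs_of_nonneg hlam0]
      gcongr
      refine le_trans (norm_sum_le _ _) ?_
      refine Finset.sum_le_sum fun K _ => ?_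
      rw [norm_smul, Real.norm_eq_abs, abs_of_nonneg (pow_nonneg hl0 K)]
  have hexp : ∀ n : ℕ, Real.exp (-α * n) = Real.exp (-α) ^ n := by
    intro n; rw [mul_comm, Real.exp_nat_mul]
  have hbound : ‖q - s‖ ≤ B * (u ^ M + lam * ∑ K ∈ Finset.range M, u ^ K) := by
    refine le_trans hnorm ?_
    have h3 : (1 - lam) ^ M * ‖x - s‖ ≤ B * u ^ M := by
      calc (1 - lam) ^ M * ‖x - s‖ ≤ (1 - lam) ^ M * (B * Real.exp (-α * M)) := by
            exact mul_le_mul_of_nonneg_left hx (pow_nonneg hl0 M)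
        _ = B * u ^ M := by rw [hexp, hu, mul_pow]; ring
    have h4 : lam * ∑ K ∈ Finset.range M, (1 - lam) ^ K * ‖χ K - s‖
        ≤ lam * ∑ K ∈ Finset.range M, (B * u ^ K) := by
      refine mul_le_mul_of_nonneg_left ?_ hlam0
      refine Finset.sum_le_sum fun K hK => ?_
      calc (1 - lam) ^ K * ‖χ K - s‖
          ≤ (1 - lam) ^ K * (B * Real.exp (-α * K)) :=
            mul_le_mul_of_nonneg_left (hχ K (Finset.mem_range.mp hK)) (pow_nonneg hl0 K)
        _ = B * u ^ K := by rw [hexp, hu, mul_pow]; ring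
    calc _ ≤ B * u ^ M + lam * ∑ K ∈ Finset.range M, (B * u ^ K) := add_le_add h3 h4
      _ = B * (u ^ M + lam * ∑ K ∈ Finset.range M, u ^ K) := by
          rw [← Finset.mul_sum]; ring
  refine le_trans hbound ?_
  have hgeom : ∑ K ∈ Finset.range M, u ^ K = (1 - u ^ M) / (1 - u) := by
    rw [geom_sum_eq (by linarith : u ≠ 1),
      div_eq_div_iff (by linarith : u - 1 ≠ 0) (by linarith : 1 - u ≠ 0)]
    ring
  rw [hgeom]
  have : u ^ M + lam * ((1 - u ^ M) / (1 - u))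
      = u ^ M * (1 - lam / (1 - u)) + lam / (1 - u) := by
    field_simp
    ring
  rw [this]
end

section
/- Let E be a normed vector space over ℝ, s ∈ E, B ≥ 0, α > 0, λ ∈ [0,1], and set u₀ = (1−λ)·exp(−α). Suppose q ∈ E is such that for every natural number M ≥ 1 there exist elements x_M, χ_{M,0}, …, χ_{M,M−1} ∈ E with q = (1−λ)^M · x_M + λ · Σ_{K=0}^{M−1} (1−λ)^K · χ_{M,K}, ‖x_M − s‖ ≤ B·exp(−α·M), and ‖χ_{M,K} − s‖ ≤ B·exp(−α·K) for all K < M. Then ‖q − s‖ ≤ B·λ/(1−u₀). -/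
theorem stmt1 {E : Type*} [NormedAddCommGroup E] [NormedSpace ℝ E]
    (s : E) (B α lam : ℝ) (hB : 0 ≤ B) (hα : 0 < α)
    (hlam0 : 0 ≤ lam) (hlam1 : lam ≤ 1) (q : E)
    (h : ∀ M : ℕ, 1 ≤ M → ∃ (x : E) (χ : ℕ → E),
        q = (1 - lam) ^ M • x + lam • ∑ K ∈ Finset.range M, (1 - lam) ^ K • χ K ∧
        ‖x - s‖ ≤ B * Real.exp (-α * M) ∧
        ∀ K < M, ‖χ K - s‖ ≤ B * Real.exp (-α * K)) :
    ‖q - s‖ ≤ B * lam / (1 - (1 - lam) * Real.exp (-α)) := by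
  set u : ℝ := (1 - lam) * Real.exp (-α) with hu
  have hexp1 : Real.exp (-α) < 1 := Real.exp_lt_one_iff.mpr (by linarith)
  have hexp0 : 0 < Real.exp (-α) := Real.exp_pos _
  have hu0 : 0 ≤ u := mul_nonneg (by linarith) hexp0.le
  have hu1 : u < 1 := by
    calc u ≤ 1 * Real.exp (-α) := by
          apply mul_le_mul_of_nonneg_right (by linarith) hexp0.le
      _ < 1 := by linarith
  have hden : 0 < 1 - u := by linarith
  -- key bound for each M ≥ 1
  have key : ∀ M : ℕ, 1 ≤ M →
      ‖q - s‖ ≤ B * u ^ M + B * lam / (1 - u) := by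
    intro M hM
    obtain ⟨x, χ, hq, hx, hχ⟩ := h M hM
    have hscal : (1 - lam) ^ M + lam * ∑ K ∈ Finset.range M, (1 - lam) ^ K = 1 := by
      have := geom_sum_mul (1 - lam) M
      nlinarith [this]
    have hqs : q - s = (1 - lam) ^ M • (x - s)
        + lam • ∑ K ∈ Finset.range M, (1 - lam) ^ K • (χ K - s) := by
      have : q - s = (1 - lam) ^ M • x
          + lam • ∑ K ∈ Finset.range M, (1 - lam) ^ K • χ K
          - ((1 - lam) ^ M + lam * ∑ K ∈ Finset.range M, (1 - lam) ^ K) • s := by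
        rw [hscal, one_smul, hq]
      rw [this]
      simp only [smul_sub, Finset.smul_sum, Finset.sum_sub_distrib, add_smul, mul_smul,
        ← Finset.sum_smul]
      abel
    rw [hqs]
    have h1 : ‖(1 - lam) ^ M • (x - s)‖ ≤ B * u ^ M := by
      rw [norm_smul, Real.norm_eq_abs, abs_of_nonneg (pow_nonneg (by linarith) M)]
      have : (1 - lam) ^ M * ‖x - s‖ ≤ (1 - lam) ^ M * (B * Real.exp (-α * M)) :=
        mul_le_mul_of_nonneg_left hx (pow_nonneg (by linarith) M)
      calc (1 - lam) ^ M * ‖x - s‖ ≤ (1 - lam) ^ M * (B * Real.exp (-α * M)) := this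
        _ = B * u ^ M := by
            rw [hu, mul_pow, ← Real.exp_nat_mul]
            ring_nf
    have h2 : ‖lam • ∑ K ∈ Finset.range M, (1 - lam) ^ K • (χ K - s)‖ ≤ B * lam / (1 - u) := by
      rw [norm_smul, Real.norm_eq_abs, abs_of_nonneg hlam0]
      have hsum : ‖∑ K ∈ Finset.range M, (1 - lam) ^ K • (χ K - s)‖
          ≤ ∑ K ∈ Finset.range M, B * u ^ K := by
        refine (norm_sum_le _ _).trans (Finset.sum_le_sum ?_)
        intro K hK
        rw [norm_smul, Real.norm_eq_abs, abs_of_nonneg (pow_nonneg (by linarith) K)]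
        calc (1 - lam) ^ K * ‖χ K - s‖
            ≤ (1 - lam) ^ K * (B * Real.exp (-α * K)) :=
              mul_le_mul_of_nonneg_left (hχ K (Finset.mem_range.mp hK)) (pow_nonneg (by linarith) K)
          _ = B * u ^ K := by
              rw [hu, mul_pow, ← Real.exp_nat_mul]
              ring_nf
      have hgeom : ∑ K ∈ Finset.range M, B * u ^ K ≤ B / (1 - u) := by
        rw [← Finset.mul_sum]
        have h3 : ∑ K ∈ Finset.range M, u ^ K ≤ 1 / (1 - u) := by
          rw [geom_sum_eq (by linarith : u ≠ 1)]
          have heq : (u ^ M - 1) / (u - 1) = (1 - u ^ M) / (1 - u) := by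
            rw [div_eq_div_iff (by linarith) (by linarith)]; ring
          rw [heq]
          gcongr
          nlinarith [pow_nonneg hu0 M]
        calc B * ∑ K ∈ Finset.range M, u ^ K ≤ B * (1 / (1 - u)) :=
              mul_le_mul_of_nonneg_left h3 hB
          _ = B / (1 - u) := by ring
      calc lam * ‖∑ K ∈ Finset.range M, (1 - lam) ^ K • (χ K - s)‖
          ≤ lam * (B / (1 - u)) :=
            mul_le_mul_of_nonneg_left (hsum.trans hgeom) hlam0
        _ = B * lam / (1 - u) := by ring
    calc ‖(1 - lam) ^ M • (x - s) + lam • ∑ K ∈ Finset.range M, (1 - lam) ^ K • (χ K - s)‖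
        ≤ ‖(1 - lam) ^ M • (x - s)‖ + ‖lam • ∑ K ∈ Finset.range M, (1 - lam) ^ K • (χ K - s)‖ :=
          norm_add_le _ _
      _ ≤ B * u ^ M + B * lam / (1 - u) := add_le_add h1 h2
  -- take the limit M → ∞
  have htend : Filter.Tendsto (fun M : ℕ => B * u ^ M + B * lam / (1 - u))
      Filter.atTop (nhds (B * lam / (1 - u))) := by
    have : Filter.Tendsto (fun M : ℕ => B * u ^ M) Filter.atTop (nhds 0) := by
      simpa using (tendsto_pow_atTop_nhds_zero_of_lt_one hu0 hu1).const_mul B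
    simpa using this.add tendsto_const_nhds
  exact ge_of_tendsto htend (Filter.eventually_atTop.mpr ⟨1, key⟩)
end

section
/- Let E be a normed vector space over ℂ, let A, Ã : E →L E be continuous linear maps with operator norms ‖A‖ ≤ 1 and ‖Ã‖ ≤ 1, let q ∈ E satisfy Ã(q) = q and ‖q‖ ≤ 1, let p ∈ E, let M be a natural number, and let ε ≥ 0 satisfy ‖A^M(q) − p‖ ≤ ε. Then ‖q − p‖ ≤ M · ‖Ã − A‖ + ε. -/
theorem stmt3 {E : Type*} [NormedAddCommGroup E] [NormedSpace ℂ E]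
    (A A' : E →L[ℂ] E) (hA : ‖A‖ ≤ 1) (hA' : ‖A'‖ ≤ 1)
    (q p : E) (hq : A' q = q) (hqn : ‖q‖ ≤ 1) (M : ℕ) (ε : ℝ) (hε : 0 ≤ ε)
    (h : ‖(A ^ M) q - p‖ ≤ ε) :
    ‖q - p‖ ≤ M * ‖A' - A‖ + ε := by
  have hq' : ∀ n : ℕ, (A' ^ n) q = q := by
    intro n
    induction n with
    | zero => simp
    | succ k ih => simp [pow_succ', ContinuousLinearMap.mul_apply, ih, hq]
  have hAk : ∀ k : ℕ, ‖(A ^ k) q‖ ≤ 1 := by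
    intro k
    induction k with
    | zero => simpa using hqn
    | succ m ih =>
      rw [pow_succ', ContinuousLinearMap.mul_apply]
      calc ‖A ((A ^ m) q)‖ ≤ ‖A‖ * ‖(A ^ m) q‖ := A.le_opNorm _
        _ ≤ 1 * 1 := mul_le_mul hA ih (norm_nonneg _) zero_le_one
        _ = 1 := one_mul 1
  have key : ∀ n : ℕ, ‖(A' ^ n) q - (A ^ n) q‖ ≤ n * ‖A' - A‖ := by
    intro n
    induction n with
    | zero => simp
    | succ k ih =>
      have expand : (A' ^ (k+1)) q - (A ^ (k+1)) q
          = A' ((A' ^ k) q - (A ^ k) q) + (A' - A) ((A ^ k) q) := by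
        simp only [pow_succ', ContinuousLinearMap.mul_apply,
          ContinuousLinearMap.sub_apply, map_sub]
        abel
      rw [expand]
      calc ‖A' ((A' ^ k) q - (A ^ k) q) + (A' - A) ((A ^ k) q)‖
          ≤ ‖A' ((A' ^ k) q - (A ^ k) q)‖ + ‖(A' - A) ((A ^ k) q)‖ := norm_add_le _ _
        _ ≤ ‖A'‖ * ‖(A' ^ k) q - (A ^ k) q‖ + ‖A' - A‖ * ‖(A ^ k) q‖ := by
            gcongr <;> [exact (A').le_opNorm _; exact (A' - A).le_opNorm _]
        _ ≤ 1 * (k * ‖A' - A‖) + ‖A' - A‖ * 1 := by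
            apply add_le_add
            · exact mul_le_mul hA' ih (norm_nonneg _) zero_le_one
            · exact mul_le_mul_of_nonneg_left (hAk k) (norm_nonneg _)
        _ = (↑(k + 1) : ℝ) * ‖A' - A‖ := by push_cast; ring
  calc ‖q - p‖ = ‖((A' ^ M) q - (A ^ M) q) + ((A ^ M) q - p)‖ := by
        rw [hq' M]; congr 1; abel
    _ ≤ ‖(A' ^ M) q - (A ^ M) q‖ + ‖(A ^ M) q - p‖ := norm_add_le _ _
    _ ≤ M * ‖A' - A‖ + ε := add_le_add (key M) h
end

section
/- Let 𝓗 be a complex Hilbert space, let A : 𝓗 →L 𝓗 be a continuous linear map, let β > 0, Δt > 0, let S ≥ 1 be a natural number, and for each integer s let U_s be a unitary operator on 𝓗. Define g(t) = π^{−3/4} β^{−1/2} · exp(i·t/β) · exp(−2t²/β²) for t ∈ ℝ. Then the family ( Δt · g(s·Δt) · U_s ∘ A ∘ U_s^* ) indexed by integers s with |s| > S is absolutely summable, and ‖ Σ_{|s|>S} Δt · g(s·Δt) · U_s ∘ A ∘ U_s^* ‖ ≤ (2Δt/(π^{3/4} β^{1/2})) · exp(−2(S·Δt/β)²) / (1 −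 exp(−2S(Δt/β)²)) · ‖A‖, where ‖·‖ is the operator norm. -/
/-- The Gaussian filter function `g(t) = π^{-3/4} β^{-1/2} e^{i t/β} e^{-2t²/β²}`. -/
noncomputable def gFilter (β t : ℝ) : ℂ :=
  ((Real.pi ^ (-(3 / 4 : ℝ)) * β ^ (-(1 / 2 : ℝ)) : ℝ) : ℂ) *
    Complex.exp (Complex.I * t / β) * Complex.exp (-2 * t ^ 2 / β ^ 2)

lemma gFilter_norm' (β t : ℝ) (hβ : 0 < β) :
    ‖gFilter β t‖ = Real.pi ^ (-(3 / 4 : ℝ)) * β ^ (-(1 / 2 : ℝ)) * Real.exp (-2 * t ^ 2 / β ^ 2) := by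
  have h1 : (Complex.I * t / β).re = 0 := by simp [Complex.div_re]
  have h2 : (-2 * (t : ℂ) ^ 2 / (β : ℂ) ^ 2) = ((-2 * t ^ 2 / β ^ 2 : ℝ) : ℂ) := by push_cast; ring
  rw [gFilter, norm_mul, norm_mul, Complex.norm_exp (Complex.I * t / β), h1, Real.exp_zero, h2,
    ← Complex.ofReal_exp, Complex.norm_real, Complex.norm_real, Real.norm_eq_abs, Real.norm_eq_abs,
    abs_of_nonneg (Real.exp_nonneg _), abs_of_nonneg (by positivity)]
  ring

lemma conj_norm_le' {H : Type*} [NormedAddCommGroup H] [InnerProductSpace ℂ H] [CompleteSpace H]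
    (A V : H →L[ℂ] H) (hV : V ∈ unitary (H →L[ℂ] H)) : ‖V ∘L A ∘L star V‖ ≤ ‖A‖ := by
  have h1 : ‖V‖ ≤ 1 := by
    have := CStarRing.norm_star_mul_self (x := V)
    rw [(Unitary.mem_iff.mp hV).1] at this
    nlinarith [ContinuousLinearMap.norm_id_le (𝕜 := ℂ) (E := H), norm_nonneg V,
      (ContinuousLinearMap.one_def (R₁ := ℂ) (M₁ := H)) ▸ this]
  have h2 : ‖star V‖ ≤ 1 := by rw [norm_star]; exact h1
  calc ‖V ∘L A ∘L star V‖ ≤ ‖V‖ * ‖A ∘L star V‖ := ContinuousLinearMap.opNorm_comp_le _ _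
    _ ≤ ‖V‖ * (‖A‖ * ‖star V‖) := by
        have := ContinuousLinearMap.opNorm_comp_le A (star V)
        nlinarith [norm_nonneg V]
    _ ≤ 1 * (‖A‖ * 1) := by gcongr
    _ = ‖A‖ := by ring

lemma arith' (d X Y E z w : ℝ) (hX : X ≠ 0) (hY : Y ≠ 0) (hz : z ≠ 0) :
    2 * (d * (X⁻¹ * Y⁻¹) * E * w * z⁻¹) = 2 * d / (X * Y) * (E / z) * w := by
  field_simp

theorem stmt8 {H : Type*} [NormedAddCommGroup H] [InnerProductSpace ℂ H] [CompleteSpace H]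
    (A : H →L[ℂ] H) (β Δt : ℝ) (hβ : 0 < β) (hΔt : 0 < Δt) (S : ℕ) (hS : 1 ≤ S)
    (U : ℤ → H →L[ℂ] H) (hU : ∀ s, U s ∈ unitary (H →L[ℂ] H)) :
    Summable (fun s : {s : ℤ // (S : ℤ) < |s|} =>
        ‖((Δt : ℂ) * gFilter β ((s : ℤ) * Δt)) • (U (s : ℤ) ∘L A ∘L star (U (s : ℤ)))‖) ∧
      ‖∑' s : {s : ℤ // (S : ℤ) < |s|},
          ((Δt : ℂ) * gFilter β ((s : ℤ) * Δt)) • (U (s : ℤ) ∘L A ∘L star (U (s : ℤ)))‖ ≤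
        2 * Δt / (Real.pi ^ ((3 : ℝ) / 4) * β ^ ((1 : ℝ) / 2)) *
          (Real.exp (-2 * ((S : ℝ) * Δt / β) ^ 2) /
            (1 - Real.exp (-2 * (S : ℝ) * (Δt / β) ^ 2))) * ‖A‖ := by
  set C : ℝ := Real.pi ^ (-(3 / 4 : ℝ)) * β ^ (-(1 / 2 : ℝ)) with hC
  have hCpos : 0 < C := by positivity
  set E : ℝ := Real.exp (-2 * ((S : ℝ) * Δt / β) ^ 2) with hE
  set r : ℝ := Real.exp (-2 * (S : ℝ) * (Δt / β) ^ 2) with hr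
  have hr0 : 0 < r := Real.exp_pos _
  have hr1 : r < 1 := by
    rw [hr, Real.exp_lt_one_iff]
    have h1 : (1 : ℝ) ≤ (S : ℝ) := by exact_mod_cast hS
    have h2 : 0 < (Δt / β) ^ 2 := by positivity
    nlinarith
  have h1r : 0 < 1 - r := by linarith
  set K0 : ℝ := Δt * C * E * ‖A‖ with hK0
  have hK0nn : 0 ≤ K0 := by positivity
  set f : {s : ℤ // (S : ℤ) < |s|} → (H →L[ℂ] H) := fun s =>
    ((Δt : ℂ) * gFilter β ((s : ℤ) * Δt)) • (U (s : ℤ) ∘L A ∘L star (U (s : ℤ))) with hf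
  -- key pointwise bound
  have key : ∀ s : ℤ, (S : ℤ) < |s| →
      ‖((Δt : ℂ) * gFilter β ((s : ℤ) * Δt)) • (U s ∘L A ∘L star (U s))‖
        ≤ K0 * r ^ (s.natAbs - S) := by
    intro s hs
    have hn : S < s.natAbs := by
      rw [Int.abs_eq_natAbs] at hs; exact_mod_cast hs
    set m : ℕ := s.natAbs - S with hm
    have hnm : s.natAbs = S + m := by omega
    have hsq : ((s : ℝ)) ^ 2 = ((S : ℝ) + (m : ℝ)) ^ 2 := by
      have : ((s.natAbs : ℝ)) = |(s : ℝ)| := by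
        simp [Nat.cast_natAbs, Int.cast_abs]
      rw [← sq_abs, ← this, hnm]
      push_cast; ring
    have hexp : Real.exp (-2 * ((s : ℝ) * Δt) ^ 2 / β ^ 2) ≤ E * r ^ m := by
      rw [hE, hr, ← Real.exp_nat_mul, ← Real.exp_add, Real.exp_le_exp]
      have hL : -2 * ((s : ℝ) * Δt) ^ 2 / β ^ 2 = -2 * ((s : ℝ)) ^ 2 * (Δt / β) ^ 2 := by
        field_simp
      have hR : -2 * ((S : ℝ) * Δt / β) ^ 2 = -2 * ((S : ℝ)) ^ 2 * (Δt / β) ^ 2 := by ring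
      rw [hL, hR, hsq]
      have hq : (0 : ℝ) ≤ (Δt / β) ^ 2 := sq_nonneg _
      have hm0 : (0 : ℝ) ≤ (m : ℝ) := Nat.cast_nonneg m
      have hS0 : (0 : ℝ) ≤ (S : ℝ) := Nat.cast_nonneg S
      nlinarith [mul_nonneg (mul_nonneg hm0 hS0) hq, mul_nonneg (mul_nonneg hm0 hm0) hq]
    have hcn : ‖U s ∘L A ∘L star (U s)‖ ≤ ‖A‖ := conj_norm_le' A (U s) (hU s)
    calc ‖((Δt : ℂ) * gFilter β ((s : ℤ) * Δt)) • (U s ∘L A ∘L star (U s))‖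
        = Δt * (C * Real.exp (-2 * ((s : ℝ) * Δt) ^ 2 / β ^ 2)) * ‖U s ∘L A ∘L star (U s)‖ := by
          rw [norm_smul, norm_mul, Complex.norm_real, Real.norm_eq_abs, abs_of_nonneg hΔt.le,
            gFilter_norm' β _ hβ]
      _ ≤ Δt * (C * (E * r ^ m)) * ‖A‖ := by
          gcongr
      _ = K0 * r ^ m := by rw [hK0]; ring
  -- majorant over ℤ
  set G : ℤ → ℝ := fun s => if S < s.natAbs then K0 * r ^ (s.natAbs - S) else 0 with hG
  set g : ℕ → ℝ := fun n => if S < n then K0 * r ^ (n - S) else 0 with hg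
  have hGnat : (fun n : ℕ => G (n : ℤ)) = g := by funext n; simp [hG, hg]
  have hGneg : (fun n : ℕ => G (-(n : ℤ))) = g := by funext n; simp [hG, hg]
  have hgsum : Summable g := by
    refine Summable.of_nonneg_of_le ?_ ?_
      ((summable_geometric_of_lt_one hr0.le hr1).mul_left (K0 / r ^ S))
    · intro n
      by_cases h : S < n
      · simp only [hg, if_pos h]; positivity
      · simp only [hg, if_neg h]; exact le_rfl
    · intro n
      by_cases h : S < n
      · have hpow : r ^ n = r ^ (n - S) * r ^ S := by rw [← pow_add]; congr 1; omega
        have heq : K0 / r ^ S * r ^ n = K0 * r ^ (n - S) := by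
          rw [hpow]; field_simp
        simp only [hg, if_pos h]
        exact le_of_eq heq.symm
      · simp only [hg, if_neg h]; positivity
  have hGsum : Summable G :=
    summable_int_iff_summable_nat_and_neg.mpr ⟨hGnat ▸ hgsum, hGneg ▸ hgsum⟩
  have hGsub : Summable (fun s : {s : ℤ // (S : ℤ) < |s|} => G (s : ℤ)) :=
    hGsum.comp_injective Subtype.coe_injective
  have hbound : ∀ s : {s : ℤ // (S : ℤ) < |s|}, ‖f s‖ ≤ G (s : ℤ) := by
    intro s
    have hn : S < (s : ℤ).natAbs := by
      have := s.2; rw [Int.abs_eq_natAbs] at this; exact_mod_cast this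
    simp only [hG, if_pos hn]
    exact key (s : ℤ) s.2
  have hsumf : Summable (fun s : {s : ℤ // (S : ℤ) < |s|} => ‖f s‖) :=
    Summable.of_nonneg_of_le (fun _ => norm_nonneg _) hbound hGsub
  refine ⟨hsumf, ?_⟩
  -- evaluate the majorant sum
  have hind : Set.indicator {s : ℤ | (S : ℤ) < |s|} G = G := by
    apply Set.indicator_eq_self.mpr
    intro s hs
    by_contra h
    apply hs
    have hn : ¬ S < s.natAbs := by
      simp only [Set.mem_setOf_eq, not_lt, Int.abs_eq_natAbs] at h ⊢
      exact_mod_cast h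
    simp [hG, if_neg hn]
  have h4 : ∑' s : {s : ℤ // (S : ℤ) < |s|}, G (s : ℤ) = ∑' s : ℤ, G s := by
    have := tsum_subtype {s : ℤ | (S : ℤ) < |s|} G
    rw [hind] at this
    exact this
  have hG0 : G 0 = 0 := by
    rw [hG]
    simp only [Int.natAbs_zero]
    rw [if_neg (by omega)]
  have h5 : ∑' s : ℤ, G s = ∑' n : ℕ, g n + ∑' n : ℕ, g n - 0 := by
    rw [Summable.tsum_of_nat_of_neg (hGnat ▸ hgsum) (hGneg ▸ hgsum), hGnat, hGneg, hG0]
  -- bound the ℕ sum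
  have hshift : ∀ i : ℕ, g (i + (S + 1)) = K0 * r ^ (i + 1) := by
    intro i
    have h : S < i + (S + 1) := by omega
    simp only [hg, if_pos h]
    have he : i + (S + 1) - S = i + 1 := by omega
    rw [he]
  have hgeo : Summable (fun i : ℕ => K0 * r ^ i) :=
    (summable_geometric_of_lt_one hr0.le hr1).mul_left _
  have hgeo1 : Summable (fun i : ℕ => K0 * r ^ (i + 1)) := by
    have : (fun i : ℕ => K0 * r ^ (i + 1)) = fun i : ℕ => (K0 * r) * r ^ i := by
      funext i; ring
    rw [this]
    exact (summable_geometric_of_lt_one hr0.le hr1).mul_left _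
  have h6 : ∑' n : ℕ, g n ≤ K0 * (1 - r)⁻¹ := by
    have hsplit := Summable.sum_add_tsum_nat_add (S + 1) hgsum
    have hzero : ∑ i ∈ Finset.range (S + 1), g i = 0 := by
      apply Finset.sum_eq_zero
      intro i hi
      have : ¬ S < i := by have := Finset.mem_range.mp hi; omega
      simp [hg, if_neg this]
    have heq : (fun i : ℕ => g (i + (S + 1))) = fun i : ℕ => K0 * r ^ (i + 1) := funext hshift
    have : ∑' n : ℕ, g n = ∑' i : ℕ, K0 * r ^ (i + 1) := by
      rw [← hsplit, hzero, zero_add, heq]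
    rw [this]
    calc ∑' i : ℕ, K0 * r ^ (i + 1) ≤ ∑' i : ℕ, K0 * r ^ i := by
          apply Summable.tsum_le_tsum _ hgeo1 hgeo
          intro i
          have : r ^ (i + 1) ≤ r ^ i := pow_le_pow_of_le_one hr0.le hr1.le (by omega)
          nlinarith
      _ = K0 * (1 - r)⁻¹ := by rw [tsum_mul_left, tsum_geometric_of_lt_one hr0.le hr1]
  -- final chain
  have hfinal : 2 * (K0 * (1 - r)⁻¹) =
      2 * Δt / (Real.pi ^ ((3 : ℝ) / 4) * β ^ ((1 : ℝ) / 2)) * (E / (1 - r)) * ‖A‖ := by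
    have hp : Real.pi ^ (-(3 / 4 : ℝ)) = (Real.pi ^ ((3 : ℝ) / 4))⁻¹ := by
      rw [← Real.rpow_neg Real.pi_pos.le]
    have hb : β ^ (-(1 / 2 : ℝ)) = (β ^ ((1 : ℝ) / 2))⁻¹ := by
      rw [← Real.rpow_neg hβ.le]
    have hp0 : (0 : ℝ) < Real.pi ^ ((3 : ℝ) / 4) := Real.rpow_pos_of_pos Real.pi_pos _
    have hb0 : (0 : ℝ) < β ^ ((1 : ℝ) / 2) := Real.rpow_pos_of_pos hβ _
    rw [hK0, hC, hp, hb]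
    exact arith' Δt _ _ E _ ‖A‖ hp0.ne' hb0.ne' (ne_of_gt h1r)
  calc ‖∑' s : {s : ℤ // (S : ℤ) < |s|}, f s‖
      ≤ ∑' s : {s : ℤ // (S : ℤ) < |s|}, ‖f s‖ := norm_tsum_le_tsum_norm hsumf
    _ ≤ ∑' s : {s : ℤ // (S : ℤ) < |s|}, G (s : ℤ) := Summable.tsum_le_tsum hbound hsumf hGsub
    _ = ∑' s : ℤ, G s := h4
    _ = ∑' n : ℕ, g n + ∑' n : ℕ, g n - 0 := h5
    _ ≤ K0 * (1 - r)⁻¹ + K0 * (1 - r)⁻¹ - 0 := by linarith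
    _ = 2 * (K0 * (1 - r)⁻¹) := by ring
    _ = _ := hfinal
end

section
/- Let β > 0, Δt > 0, and ν ∈ ℝ. Define g(t) = π^{−3/4} β^{−1/2} · exp(i·t/β) · exp(−2t²/β²) for t ∈ ℝ and η(μ) = (β²/(4π))^{1/4} · exp(−(β·μ + 1)²/8) for μ ∈ ℝ. Then both series below converge absolutely and Δt · Σ_{s∈ℤ} g(s·Δt) · exp(i·ν·s·Δt) = Σ_{k∈ℤ} η(ν − 2πk/Δt). -/
open Real Complex

lemma summable_exp_neg_sq_add' {c : ℝ} (d : ℝ) (hc : 0 < c) :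
    Summable (fun n : ℤ => Real.exp (-c * (n : ℝ) ^ 2 + d * n)) := by
  have hT : 0 < c / π := div_pos hc Real.pi_pos
  refine ((summable_pow_mul_jacobiTheta₂_term_bound (|d| / (2 * π)) hT 0).of_nonneg_of_le
    (fun n => (Real.exp_pos _).le) fun n => ?_)
  simp only [pow_zero, one_mul]
  rw [Real.exp_le_exp]
  have h1 : -π * (c / π * (n : ℝ) ^ 2 - 2 * (|d| / (2 * π)) * |(n : ℝ)|) =
      -c * (n : ℝ) ^ 2 + |d| * |(n : ℝ)| := by
    field_simp
    ring
  calc -c * (n : ℝ) ^ 2 + d * n ≤ -c * (n : ℝ) ^ 2 + |d| * |(n : ℝ)| := by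
        gcongr _ + ?_
        calc d * n ≤ |d * n| := le_abs_self _
        _ = |d| * |(n : ℝ)| := abs_mul _ _
    _ = _ := by rw [Int.cast_abs]; exact h1.symm

/-- The frequency-domain filter `η(μ) = (β²/(4π))^{1/4} e^{-(βμ+1)²/8}`. -/
noncomputable def etaFilter (β μ : ℝ) : ℝ :=
  (β ^ 2 / (4 * Real.pi)) ^ ((1 : ℝ) / 4) * Real.exp (-(β * μ + 1) ^ 2 / 8)

theorem stmt11 (β Δt ν : ℝ) (hβ : 0 < β) (hΔt : 0 < Δt) :
    Summable (fun s : ℤ => ‖gFilter β ((s : ℝ) * Δt) *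
        Complex.exp (Complex.I * ν * ((s : ℝ) * Δt))‖) ∧
      Summable (fun k : ℤ => ‖etaFilter β (ν - 2 * Real.pi * (k : ℝ) / Δt)‖) ∧
      (Δt : ℂ) * ∑' s : ℤ, gFilter β ((s : ℝ) * Δt) *
          Complex.exp (Complex.I * ν * ((s : ℝ) * Δt)) =
        ((∑' k : ℤ, etaFilter β (ν - 2 * Real.pi * (k : ℝ) / Δt) : ℝ) : ℂ) := by
  have hπ : (0:ℝ) < π := Real.pi_pos
  have hβ' : (β:ℂ) ≠ 0 := Complex.ofReal_ne_zero.mpr hβ.ne'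
  have hΔt' : (Δt:ℂ) ≠ 0 := Complex.ofReal_ne_zero.mpr hΔt.ne'
  have hπ' : (π:ℂ) ≠ 0 := Complex.ofReal_ne_zero.mpr hπ.ne'
  set K : ℝ := π ^ (-(3/4 : ℝ)) * β ^ (-(1/2 : ℝ)) with hK
  have hK0 : 0 < K := mul_pos (Real.rpow_pos_of_pos hπ _) (Real.rpow_pos_of_pos hβ _)
  set a : ℝ := 2 * Δt ^ 2 / (π * β ^ 2) with ha
  have ha0 : 0 < a := by positivity
  set r : ℝ := Δt * (β * ν + 1) / (2 * π * β) with hr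
  set D : ℝ := (β ^ 2 / (4 * π)) ^ ((1:ℝ)/4) with hD
  have hD0 : 0 < D := Real.rpow_pos_of_pos (by positivity) _
  -- term identity on the g-side
  have hterm : ∀ s : ℤ, gFilter β ((s:ℝ) * Δt) * Complex.exp (Complex.I * ν * ((s:ℝ)*Δt))
      = (K : ℂ) * Complex.exp (-(π:ℂ) * a * (s:ℂ)^2 + 2*π*(Complex.I * r)*(s:ℂ)) := by
    intro s
    rw [gFilter, mul_assoc, mul_assoc, ← Complex.exp_add, ← Complex.exp_add]
    congr 1
    congr 1
    push_cast [ha, hr]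
    field_simp
    ring
  -- term identity on the η-side (real version)
  have hetaR : ∀ k : ℤ, etaFilter β (ν - 2*π*(k:ℝ)/Δt) = D * Real.exp (-π/a * ((k:ℝ) - r)^2) := by
    intro k
    rw [etaFilter, ← hD]
    congr 1
    congr 1
    rw [ha, hr]
    field_simp
    ring
  -- norm of g-side terms
  have hnorm : ∀ s : ℤ, ‖gFilter β ((s:ℝ)*Δt) * Complex.exp (Complex.I*ν*((s:ℝ)*Δt))‖
      = K * Real.exp (-(π*a) * (s:ℝ)^2 + 0 * (s:ℝ)) := by
    intro s
    rw [hterm s, norm_mul]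
    have hz : -(π:ℂ) * a * (s:ℂ)^2 + 2*π*(Complex.I * r)*(s:ℂ)
        = ((-(π*a) * (s:ℝ)^2 + 0 * (s:ℝ) : ℝ) : ℂ) + ((2*π*r*(s:ℝ) : ℝ) : ℂ) * Complex.I := by
      push_cast; ring
    rw [hz]
    simp [Complex.norm_exp, Complex.add_re, abs_of_pos hK0]
    left; left; norm_cast
  have hsum1 : Summable (fun s : ℤ => ‖gFilter β ((s:ℝ)*Δt) *
      Complex.exp (Complex.I*ν*((s:ℝ)*Δt))‖) := by
    refine ((summable_exp_neg_sq_add' 0 (show (0:ℝ) < π*a by positivity)).mul_left K).congr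
      fun s => (hnorm s).symm
  have hsum2' : Summable (fun k : ℤ => etaFilter β (ν - 2*π*(k:ℝ)/Δt)) := by
    refine (((summable_exp_neg_sq_add' (2*π*r/a) (div_pos hπ ha0)).mul_left
      (D * Real.exp (-π/a*r^2))).congr fun k => ?_)
    rw [hetaR k, mul_assoc, ← Real.exp_add]
    congr 2
    field_simp
    ring
  have hsum2 : Summable (fun k : ℤ => ‖etaFilter β (ν - 2*π*(k:ℝ)/Δt)‖) := by
    simpa [Real.norm_eq_abs] using hsum2'.abs
  -- the constant identity
  have hx0 : 0 < a ^ ((1:ℝ)/2) := Real.rpow_pos_of_pos ha0 _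
  have hconst : Δt * K = D * a ^ ((1:ℝ)/2) := by
    have l2 : Real.log 4 = 2 * Real.log 2 := by
      rw [show (4:ℝ) = 2^2 by norm_num, Real.log_pow]; push_cast; ring
    have e1 : Real.log (Δt * K)
        = Real.log Δt + (-(3/4)) * Real.log π + (-(1/2)) * Real.log β := by
      rw [hK, Real.log_mul hΔt.ne' hK0.ne',
        Real.log_mul (Real.rpow_pos_of_pos hπ _).ne' (Real.rpow_pos_of_pos hβ _).ne',
        Real.log_rpow hπ, Real.log_rpow hβ]
      ring
    have e2 : Real.log (D * a ^ ((1:ℝ)/2))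
        = (1/4) * (2 * Real.log β - (Real.log 4 + Real.log π))
          + (1/2) * (Real.log 2 + 2 * Real.log Δt - (Real.log π + 2 * Real.log β)) := by
      rw [Real.log_mul hD0.ne' hx0.ne', hD,
        Real.log_rpow (show (0:ℝ) < β^2/(4*π) by positivity), Real.log_rpow ha0, ha,
        Real.log_div (by positivity : (0:ℝ) < β^2).ne' (by positivity : (0:ℝ) < 4*π).ne',
        Real.log_div (by positivity : (0:ℝ) < 2*Δt^2).ne' (by positivity : (0:ℝ) < π*β^2).ne',
        Real.log_mul (by norm_num : (4:ℝ) ≠ 0) hπ.ne',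
        Real.log_mul (by norm_num : (2:ℝ) ≠ 0) (by positivity : (0:ℝ) < Δt^2).ne',
        Real.log_mul hπ.ne' (by positivity : (0:ℝ) < β^2).ne',
        Real.log_pow, Real.log_pow]
      push_cast
      ring
    have hl : Real.log (Δt * K) = Real.log (D * a ^ ((1:ℝ)/2)) := by
      rw [e1, e2]; linarith
    have := congrArg Real.exp hl
    rwa [Real.exp_log (by positivity), Real.exp_log (by positivity)] at this
  refine ⟨hsum1, hsum2, ?_⟩
  have key := Complex.tsum_exp_neg_quadratic (a := ((a:ℝ):ℂ))
    (by simpa using ha0) (Complex.I * r)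
  have hC : (Δt:ℂ) * ((K:ℂ) * (1/((a:ℝ):ℂ)^(1/2 : ℂ))) = (D:ℂ) := by
    have h2 : ((a ^ ((1:ℝ)/2) : ℝ) : ℂ) = ((a:ℝ):ℂ) ^ (1/2 : ℂ) := by
      rw [Complex.ofReal_cpow ha0.le]; norm_num
    rw [← h2, ← mul_assoc, mul_one_div,
      div_eq_iff (Complex.ofReal_ne_zero.mpr hx0.ne')]
    exact_mod_cast hconst
  have hIb : Complex.I * (Complex.I * (r:ℝ)) = -((r:ℝ):ℂ) := by
    rw [← mul_assoc, Complex.I_mul_I]; ring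
  calc (Δt:ℂ) * ∑' s : ℤ, gFilter β ((s:ℝ)*Δt) * Complex.exp (Complex.I*ν*((s:ℝ)*Δt))
      = (Δt:ℂ) * ((K:ℂ) * ∑' s : ℤ,
          Complex.exp (-(π:ℂ) * a * (s:ℂ)^2 + 2*π*(Complex.I * r)*(s:ℂ))) := by
        congr 1
        rw [← tsum_mul_left]
        exact tsum_congr hterm
    _ = (Δt:ℂ) * ((K:ℂ) * (1/((a:ℝ):ℂ)^(1/2 : ℂ) * ∑' n : ℤ,
          Complex.exp (-(π:ℂ)/a * ((n:ℂ) + Complex.I*(Complex.I * r))^2))) := by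
        rw [key]
    _ = (D:ℂ) * ∑' n : ℤ,
          Complex.exp (-(π:ℂ)/a * ((n:ℂ) + Complex.I*(Complex.I * r))^2) := by
        rw [← hC]; ring
    _ = ((∑' k : ℤ, etaFilter β (ν - 2*π*(k:ℝ)/Δt) : ℝ) : ℂ) := by
        rw [Complex.ofReal_tsum, ← tsum_mul_left]
        refine (tsum_congr fun k => ?_).symm
        rw [hetaR k, Complex.ofReal_mul, Complex.ofReal_exp]
        congr 1
        rw [hIb]
        push_cast
        ring
end

section
/- Let N be a positive natural number, let H be a Hermitian N×N complex matrix, let β ∈ ℝ, and let B be a finite subset of ℝ closed under negation (ν ∈ B implies −ν ∈ B). Let η : ℝ → ℝ satisfy η(ν) = exp(−βν/2)·η(−ν) for every ν ∈ B, and let A : ℝ → (N×N complex matrices) satisfy, for every ν ∈ B, the commutation relation H·A(ν) − A(ν)·H = ν·A(ν) and the Hermiticity relation (A(ν))ᴴ = A(−ν). Define L = Σ_{ν∈B} η(ν)·A(ν). Then exp((β/2)·H) · L · exp(−(β/2)·H) = Lᴴ. -/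
open Matrix NormedSpace

section Aux
attribute [local instance] Matrix.linftyOpNormedRing Matrix.linftyOpNormedAlgebra

lemma exp_conj_eigen {N : ℕ} (H A : Matrix (Fin N) (Fin N) ℂ) (ν c : ℂ)
    (h : H * A - A * H = ν • A) :
    exp (c • H) * A = Complex.exp (c * ν) • (A * exp (c • H)) := by
  have h' : H * A = A * H + ν • A := by
    rw [← h]; abel
  have hXA : (c • H) * A = A * (c • H + (c * ν) • 1) := by
    rw [smul_mul_assoc, h', mul_add, Matrix.mul_smul, Matrix.mul_smul, mul_one]
    module
  have hpow : ∀ n : ℕ, (c • H) ^ n * A = A * (c • H + (c * ν) • 1) ^ n := by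
    intro n
    induction n with
    | zero => simp
    | succ n ih =>
      rw [pow_succ, pow_succ, mul_assoc, hXA, ← mul_assoc, ih, mul_assoc]
  have h1 : HasSum (fun n : ℕ => ((n.factorial : ℂ))⁻¹ • (c • H) ^ n * A)
      (exp (c • H) * A) := (exp_series_hasSum_exp' (𝕂 := ℂ) (c • H)).mul_right A
  have h2 : HasSum (fun n : ℕ => A * ((n.factorial : ℂ))⁻¹ • (c • H + (c * ν) • 1) ^ n)
      (A * exp (c • H + (c * ν) • 1)) :=
    (exp_series_hasSum_exp' (𝕂 := ℂ) (c • H + (c * ν) • 1)).mul_left A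
  have heq : (fun n : ℕ => ((n.factorial : ℂ))⁻¹ • (c • H) ^ n * A) =
      fun n : ℕ => A * ((n.factorial : ℂ))⁻¹ • (c • H + (c * ν) • 1) ^ n := by
    funext n
    rw [smul_mul_assoc, mul_smul_comm, hpow]
  rw [heq] at h1
  have key : exp (c • H) * A = A * exp (c • H + (c * ν) • 1) := h1.unique h2
  rw [key, add_comm, Matrix.exp_add_of_commute _ _
    (((Commute.one_left H).smul_left (c * ν)).smul_right c)]
  have hs : exp ((c * ν) • (1 : Matrix (Fin N) (Fin N) ℂ)) = Complex.exp (c * ν) • 1 := by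
    have h0 : (c * ν) • (1 : Matrix (Fin N) (Fin N) ℂ) = algebraMap ℂ _ (c * ν) := by
      simp [Algebra.algebraMap_eq_smul_one]
    rw [h0]
    erw [← map_exp (algebraMap ℂ (Matrix (Fin N) (Fin N) ℂ)) (continuous_algebraMap _ _)]
    rw [← Complex.exp_eq_exp_ℂ, Algebra.algebraMap_eq_smul_one]
  rw [hs, smul_mul_assoc, one_mul, mul_smul_comm]

lemma exp_mul_exp_neg {N : ℕ} (H : Matrix (Fin N) (Fin N) ℂ) (c : ℂ) :
    exp (c • H) * exp ((-c) • H) = 1 := by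
  rw [← Matrix.exp_add_of_commute _ _ (((Commute.refl H).smul_left c).smul_right (-c))]
  simp [← add_smul]

end Aux

theorem stmt14 (N : ℕ) (hN : 0 < N) (H : Matrix (Fin N) (Fin N) ℂ) (hH : H.IsHermitian)
    (β : ℝ) (B : Finset ℝ) (hBneg : ∀ ν ∈ B, -ν ∈ B)
    (η : ℝ → ℝ) (hη : ∀ ν ∈ B, η ν = Real.exp (-β * ν / 2) * η (-ν))
    (A : ℝ → Matrix (Fin N) (Fin N) ℂ)
    (hcomm : ∀ ν ∈ B, H * A ν - A ν * H = (ν : ℂ) • A ν)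
    (hherm : ∀ ν ∈ B, (A ν)ᴴ = A (-ν)) :
    NormedSpace.exp (((β / 2 : ℝ) : ℂ) • H) * (∑ ν ∈ B, (η ν : ℂ) • A ν) *
        NormedSpace.exp ((-(β / 2 : ℝ) : ℂ) • H) =
      (∑ ν ∈ B, (η ν : ℂ) • A ν)ᴴ := by
  set c : ℂ := ((β / 2 : ℝ) : ℂ) with hc
  have hterm : ∀ ν ∈ B, exp (c • H) * ((η ν : ℂ) • A ν) * exp ((-c) • H)
      = ((η (-ν) : ℝ) : ℂ) • A ν := by
    intro ν hν
    have hη' : η (-ν) = Real.exp (β * ν / 2) * η ν := by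
      have h1 := hη (-ν) (hBneg ν hν)
      rw [neg_neg] at h1
      rw [h1]; ring_nf
    have harg : c * (ν : ℂ) = ((β * ν / 2 : ℝ) : ℂ) := by rw [hc]; push_cast; ring
    rw [mul_smul_comm, smul_mul_assoc, exp_conj_eigen H (A ν) (ν : ℂ) c (hcomm ν hν),
      smul_mul_assoc, mul_assoc, exp_mul_exp_neg, mul_one, smul_smul]
    congr 1
    rw [hη', Complex.ofReal_mul, Complex.ofReal_exp, ← harg, mul_comm]
  rw [Finset.mul_sum, Finset.sum_mul, conjTranspose_sum]
  refine (Finset.sum_congr rfl hterm).trans ?_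
  refine (Finset.sum_nbij' (fun ν => -ν) (fun ν => -ν) hBneg (fun a ha => hBneg a ha)
    (fun a _ => neg_neg a) (fun a _ => neg_neg a) (fun a ha => ?_)).symm
  rw [conjTranspose_smul, hherm a ha, Complex.star_def, Complex.conj_ofReal, neg_neg]
end

section
/- Let N be a positive natural number, let H be a Hermitian N×N complex matrix, let β ∈ ℝ, and write σhalf = exp(−(β/2)·H) (matrix exponential). Let L be an N×N complex matrix satisfying exp((β/2)·H) · L · exp(−(β/2)·H) = Lᴴ. Then for all N×N complex matrices X and Y, Tr( Xᴴ · σhalf · (Lᴴ · Y · L) · σhalf ) = Tr( (Lᴴ · X · L)ᴴ · σhalf · Y · σhalf ). -/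
open Matrix

theorem stmt15 (N : ℕ) (hN : 0 < N) (H : Matrix (Fin N) (Fin N) ℂ) (hH : H.IsHermitian)
    (β : ℝ) (L : Matrix (Fin N) (Fin N) ℂ)
    (hL : NormedSpace.exp (((β / 2 : ℝ) : ℂ) • H) * L *
        NormedSpace.exp ((-(β / 2 : ℝ) : ℂ) • H) = Lᴴ) :
    ∀ X Y : Matrix (Fin N) (Fin N) ℂ,
      (Xᴴ * NormedSpace.exp ((-(β / 2 : ℝ) : ℂ) • H) * (Lᴴ * Y * L) *
          NormedSpace.exp ((-(β / 2 : ℝ) : ℂ) • H)).trace =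
        ((Lᴴ * X * L)ᴴ * NormedSpace.exp ((-(β / 2 : ℝ) : ℂ) • H) * Y *
          NormedSpace.exp ((-(β / 2 : ℝ) : ℂ) • H)).trace := by
  intro X Y
  set A : Matrix (Fin N) (Fin N) ℂ := NormedSpace.exp ((-(β / 2 : ℝ) : ℂ) • H) with hA
  set B : Matrix (Fin N) (Fin N) ℂ := NormedSpace.exp (((β / 2 : ℝ) : ℂ) • H) with hB
  have hcomm : Commute ((-(β / 2 : ℝ) : ℂ) • H) (((β / 2 : ℝ) : ℂ) • H) :=
    ((Commute.refl H).smul_right _).smul_left _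
  have hAB : A * B = 1 := by
    rw [hA, hB, ← Matrix.exp_add_of_commute _ _ hcomm]
    have : (-(β / 2 : ℝ) : ℂ) • H + ((β / 2 : ℝ) : ℂ) • H = 0 := by
      rw [← add_smul]; push_cast; ring_nf; simp
    rw [this, NormedSpace.exp_zero]
  have e1 : L * A = A * Lᴴ := by
    rw [← hL, ← mul_assoc, ← mul_assoc, hAB, one_mul]
  have hct : (Lᴴ * X * L)ᴴ = Lᴴ * Xᴴ * L := by
    simp [conjTranspose_mul, mul_assoc]
  have lhs_eq : Xᴴ * A * (Lᴴ * Y * L) * A = Xᴴ * (A * Lᴴ) * Y * (L * A) := by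
    noncomm_ring
  have rhs_eq : (Lᴴ * X * L)ᴴ * A * Y * A = Lᴴ * (Xᴴ * (L * A) * Y * A) := by
    rw [hct]; noncomm_ring
  rw [lhs_eq, e1, rhs_eq, e1, Matrix.trace_mul_comm Lᴴ]
  congr 1
  noncomm_ring
end
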